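/- Let θ ≥ 0, let m ≥ 1, let A, B ∈ ℝ^{mn×mn} be viewed as n×n block matrices with m×m blocks A_{kl}, B_{k'l'}, and let Θ_{klk'l'rαβz} ∈ ℝ, for (k,l,k',l') ∈ {1,…,n}^4, r ∈ {1,…,R}, (α,β,z) ∈ {1,…,m}^3, satisfy |Θ_{klk'l'rαβz}| ≤ θ. Define the error matrix E ∈ ℝ^{mn×mn} blockwise by (E_{ij})_{αβ} = Σ_{r=1}^R w_{ijr} Σ_{k,l=1}^n Σ_{k',l'=1}^n Σ_{z=1}^m u_{klr} v_{k'l'r} (A_{kl})_{αz} (B_{k'l'})_{zβ} Θ_{klk'l'rαβz}. Then ‖E‖ ≤ θ · √R · ‖A‖ · ‖B‖ · √(Σ_{r=1}^R ‖U_{::r}‖² ‖V_{::r}‖² ‖W_{::r}‖²), where U_{::r} ∈ ℝ^{n×n} is the r-th frontal slice of U (so ‖U_{::r}‖² = Σ_{k,l} u_{klr}²), and similarly for V_{::r} and W_{::r}. -/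
import Mathlib


open scoped BigOperators Matrix

/-- Frobenius norm of a real matrix. -/
noncomputable def frob {ι κ : Type*} [Fintype ι] [Fintype κ] (A : Matrix ι κ ℝ) : ℝ :=
  Real.sqrt (∑ i, ∑ j, (A i j) ^ 2)

/-- Frobenius norm of a 6-mode tensor. -/
noncomputable def frob6 {n : ℕ} (T : Fin n → Fin n → Fin n → Fin n → Fin n → Fin n → ℝ) : ℝ :=
  Real.sqrt (∑ k, ∑ l, ∑ k', ∑ l', ∑ i, ∑ j, (T k l k' l' i j) ^ 2)

/-- The 6-mode tensor Y with entries y_{klk'l'ij} = Σ_r u_{klr} v_{k'l'r} w_{ijr}. -/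
noncomputable def Ytens {n R : ℕ} (U V W : Fin n → Fin n → Fin R → ℝ) :
    Fin n → Fin n → Fin n → Fin n → Fin n → Fin n → ℝ :=
  fun k l k' l' i j => ∑ r, U k l r * V k' l' r * W i j r

/-- The exact matrix-multiplication tensor X, x_{klk'l'ij} = δ_{ki} δ_{l'j} δ_{lk'}. -/
def Xtens (n : ℕ) : Fin n → Fin n → Fin n → Fin n → Fin n → Fin n → ℝ :=
  fun k l k' l' i j =>
    (if k = i then (1 : ℝ) else 0) * (if l' = j then (1 : ℝ) else 0) *
      (if l = k' then (1 : ℝ) else 0)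

/-- The block bilinear computation f on (mn)×(mn) matrices indexed by Fin n × Fin m
(first index: block position, second index: position within the m×m block). -/
noncomputable def blinf {n R m : ℕ} (U V W : Fin n → Fin n → Fin R → ℝ)
    (A B : Matrix (Fin n × Fin m) (Fin n × Fin m) ℝ) :
    Matrix (Fin n × Fin m) (Fin n × Fin m) ℝ :=
  fun p q => ∑ r, W p.1 q.1 r *
    ∑ z, (∑ k, ∑ l, U k l r * A (k, p.2) (l, z)) *
         (∑ k', ∑ l', V k' l' r * B (k', z) (l', q.2))

/-- κ = n⁻³ Σ_{i,j,l} (1 − Σ_r u_{ilr} v_{ljr} w_{ijr}). -/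
noncomputable def kappa {n R : ℕ} (U V W : Fin n → Fin n → Fin R → ℝ) : ℝ :=
  ((n : ℝ) ^ 3)⁻¹ * ∑ i, ∑ j, ∑ l, (1 - ∑ r, U i l r * V l j r * W i j r)

/-- M = P S : block matrix with m×m block s(j)·I_m at block position (π(j), j). -/
def Mmat {n : ℕ} (m : ℕ) (s : Fin n → ℝ) (π : Equiv.Perm (Fin n)) :
    Matrix (Fin n × Fin m) (Fin n × Fin m) ℝ :=
  fun p q => if p.1 = π q.1 ∧ p.2 = q.2 then s q.1 else 0

/-- The randomized bilinear computation f̂(A,B) = (1−κ)⁻¹ M₁ᵀ f(M₁AM₂ᵀ, M₂BM₃ᵀ) M₃. -/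
noncomputable def fhat {n R : ℕ} (m : ℕ) (U V W : Fin n → Fin n → Fin R → ℝ)
    (s₁ s₂ s₃ : Fin n → ℝ) (π₁ π₂ π₃ : Equiv.Perm (Fin n))
    (A B : Matrix (Fin n × Fin m) (Fin n × Fin m) ℝ) :
    Matrix (Fin n × Fin m) (Fin n × Fin m) ℝ :=
  (1 - kappa U V W)⁻¹ •
    ((Mmat m s₁ π₁)ᵀ *
      blinf U V W (Mmat m s₁ π₁ * A * (Mmat m s₂ π₂)ᵀ) (Mmat m s₂ π₂ * B * (Mmat m s₃ π₃)ᵀ) *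
      Mmat m s₃ π₃)



section helpers
variable {α β γ δ ε : Type*} [Fintype α] [Fintype β] [Fintype γ] [Fintype δ] [Fintype ε]

lemma sum_rot3 (f : α → β → γ → ℝ) :
    (∑ a, ∑ b, ∑ c, f a b c) = ∑ c, ∑ a, ∑ b, f a b c := by
  have h : ∀ a, (∑ b, ∑ c, f a b c) = ∑ c, ∑ b, f a b c := fun a => Finset.sum_comm
  simp_rw [h]
  exact Finset.sum_comm

lemma sum_rot4 (f : α → β → γ → δ → ℝ) :
    (∑ a, ∑ b, ∑ c, ∑ d, f a b c d) = ∑ d, ∑ a, ∑ b, ∑ c, f a b c d := by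
  have h : ∀ a, (∑ b, ∑ c, ∑ d, f a b c d) = ∑ d, ∑ b, ∑ c, f a b c d :=
    fun a => sum_rot3 _
  simp_rw [h]
  exact Finset.sum_comm

lemma sum_rot5 (f : α → β → γ → δ → ε → ℝ) :
    (∑ a, ∑ b, ∑ c, ∑ d, ∑ e, f a b c d e) = ∑ e, ∑ a, ∑ b, ∑ c, ∑ d, f a b c d e := by
  have h : ∀ a, (∑ b, ∑ c, ∑ d, ∑ e, f a b c d e) = ∑ e, ∑ b, ∑ c, ∑ d, f a b c d e :=
    fun a => sum_rot4 _
  simp_rw [h]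
  exact Finset.sum_comm

lemma cs2 {n : ℕ} (f g : Fin n → Fin n → ℝ) :
    (∑ k, ∑ l, f k l * g k l) ^ 2 ≤ (∑ k, ∑ l, (f k l) ^ 2) * (∑ k, ∑ l, (g k l) ^ 2) := by
  have h := Finset.sum_mul_sq_le_sq_mul_sq Finset.univ
    (fun p : Fin n × Fin n => f p.1 p.2) (fun p : Fin n × Fin n => g p.1 p.2)
  simpa [Fintype.sum_prod_type] using h

end helpers

lemma pointwise {n R m : ℕ} (U V W : Fin n → Fin n → Fin R → ℝ) (θ : ℝ) (hθ : 0 ≤ θ)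
    (A B : Matrix (Fin n × Fin m) (Fin n × Fin m) ℝ)
    (Θ : Fin n → Fin n → Fin n → Fin n → Fin R → Fin m → Fin m → Fin m → ℝ)
    (hΘ : ∀ k l k' l' r α β z, |Θ k l k' l' r α β z| ≤ θ)
    (i j : Fin n) (α β : Fin m) :
    (∑ r, W i j r * ∑ k, ∑ l, ∑ k', ∑ l', ∑ z,
        U k l r * V k' l' r * A (k, α) (l, z) * B (k', z) (l', β) * Θ k l k' l' r α β z) ^ 2
    ≤ (R : ℝ) * θ ^ 2 *
        (∑ r, (W i j r) ^ 2 * (∑ k, ∑ l, (U k l r) ^ 2) * (∑ k, ∑ l, (V k l r) ^ 2)) *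
        (∑ z, ∑ k, ∑ l, (A (k, α) (l, z)) ^ 2) *
        (∑ z, ∑ k, ∑ l, (B (k, z) (l, β)) ^ 2) := by
  classical
  set S : Fin R → ℝ := fun r => ∑ k, ∑ l, ∑ k', ∑ l', ∑ z,
      U k l r * V k' l' r * A (k, α) (l, z) * B (k', z) (l', β) * Θ k l k' l' r α β z with hSdef
  set u2 : Fin R → ℝ := fun r => ∑ k, ∑ l, (U k l r) ^ 2 with hu2
  set v2 : Fin R → ℝ := fun r => ∑ k, ∑ l, (V k l r) ^ 2 with hv2
  set Ar : ℝ := ∑ z, ∑ k, ∑ l, (A (k, α) (l, z)) ^ 2 with hAr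
  set Br : ℝ := ∑ z, ∑ k, ∑ l, (B (k, z) (l, β)) ^ 2 with hBr
  change (∑ r, W i j r * S r) ^ 2 ≤
      (R : ℝ) * θ ^ 2 * (∑ r, (W i j r) ^ 2 * u2 r * v2 r) * Ar * Br
  clear_value S u2 v2 Ar Br
  have hAr0 : 0 ≤ Ar := by rw [hAr]; positivity
  have hBr0 : 0 ≤ Br := by rw [hBr]; positivity
  have hu20 : ∀ r, 0 ≤ u2 r := fun r => by simp only [hu2]; positivity
  have hv20 : ∀ r, 0 ≤ v2 r := fun r => by simp only [hv2]; positivity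
  -- per-r bound
  have hS : ∀ r, (S r) ^ 2 ≤ θ ^ 2 * u2 r * v2 r * Ar * Br := by
    intro r
    set P : Fin m → ℝ := fun z => ∑ k, ∑ l, |U k l r| * |A (k, α) (l, z)| with hP
    set Q : Fin m → ℝ := fun z => ∑ k, ∑ l, |V k l r| * |B (k, z) (l, β)| with hQ
    have hP0 : ∀ z, 0 ≤ P z := fun z => by positivity
    have hQ0 : ∀ z, 0 ≤ Q z := fun z => by positivity
    -- |S r| ≤ θ * ∑ z, P z * Q z
    have habs : |S r| ≤ θ * ∑ z, P z * Q z := by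
      simp only [hSdef]
      have h1 : |(∑ k, ∑ l, ∑ k', ∑ l', ∑ z,
          U k l r * V k' l' r * A (k, α) (l, z) * B (k', z) (l', β) * Θ k l k' l' r α β z)| ≤ ∑ k, ∑ l, ∑ k', ∑ l', ∑ z,
          (|U k l r| * |V k' l' r| * |A (k, α) (l, z)| * |B (k', z) (l', β)|) * θ := by
        refine (Finset.abs_sum_le_sum_abs _ _).trans (Finset.sum_le_sum fun k _ => ?_)
        refine (Finset.abs_sum_le_sum_abs _ _).trans (Finset.sum_le_sum fun l _ => ?_)
        refine (Finset.abs_sum_le_sum_abs _ _).trans (Finset.sum_le_sum fun k' _ => ?_)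
        refine (Finset.abs_sum_le_sum_abs _ _).trans (Finset.sum_le_sum fun l' _ => ?_)
        refine (Finset.abs_sum_le_sum_abs _ _).trans (Finset.sum_le_sum fun z _ => ?_)
        rw [abs_mul, abs_mul, abs_mul, abs_mul]
        have h0 : (0:ℝ) ≤ |U k l r| * |V k' l' r| * |A (k, α) (l, z)| * |B (k', z) (l', β)| := by
          positivity
        exact mul_le_mul_of_nonneg_left (hΘ k l k' l' r α β z) h0
      have h2 : (∑ k, ∑ l, ∑ k', ∑ l', ∑ z,
          (|U k l r| * |V k' l' r| * |A (k, α) (l, z)| * |B (k', z) (l', β)|) * θ)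
          = θ * ∑ z, P z * Q z := by
        have h3 : (∑ k, ∑ l, ∑ k', ∑ l', ∑ z,
            (|U k l r| * |V k' l' r| * |A (k, α) (l, z)| * |B (k', z) (l', β)|) * θ)
            = ∑ z, ∑ k, ∑ l, ∑ k', ∑ l',
            (|U k l r| * |V k' l' r| * |A (k, α) (l, z)| * |B (k', z) (l', β)|) * θ :=
          sum_rot5 _
        rw [h3, Finset.mul_sum]
        refine Finset.sum_congr rfl fun z _ => ?_
        have h4 : θ * (P z * Q z) = ∑ k, ∑ l, ∑ k', ∑ l',
            (|U k l r| * |V k' l' r| * |A (k, α) (l, z)| * |B (k', z) (l', β)|) * θ := by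
          rw [hP, hQ]
          rw [Finset.sum_mul, Finset.mul_sum]
          refine Finset.sum_congr rfl fun k _ => ?_
          rw [Finset.sum_mul, Finset.mul_sum]
          refine Finset.sum_congr rfl fun l _ => ?_
          rw [Finset.mul_sum, Finset.mul_sum]
          refine Finset.sum_congr rfl fun k' _ => ?_
          rw [Finset.mul_sum, Finset.mul_sum]
          refine Finset.sum_congr rfl fun l' _ => ?_
          ring
        rw [h4]
      exact h1.trans_eq h2
    have hPQ0 : 0 ≤ ∑ z, P z * Q z :=
      Finset.sum_nonneg fun z _ => mul_nonneg (hP0 z) (hQ0 z)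
    have hsq : (S r) ^ 2 ≤ (θ * ∑ z, P z * Q z) ^ 2 := by
      rw [← sq_abs (S r)]
      exact pow_le_pow_left₀ (abs_nonneg _) habs 2
    have hcs : (∑ z, P z * Q z) ^ 2 ≤ (∑ z, (P z) ^ 2) * (∑ z, (Q z) ^ 2) :=
      Finset.sum_mul_sq_le_sq_mul_sq Finset.univ P Q
    have hPz : ∀ z, (P z) ^ 2 ≤ u2 r * (∑ k, ∑ l, (A (k, α) (l, z)) ^ 2) := by
      intro z
      have := cs2 (fun k l => |U k l r|) (fun k l => |A (k, α) (l, z)|)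
      simpa [hP, hu2, sq_abs] using this
    have hQz : ∀ z, (Q z) ^ 2 ≤ v2 r * (∑ k, ∑ l, (B (k, z) (l, β)) ^ 2) := by
      intro z
      have := cs2 (fun k l => |V k l r|) (fun k l => |B (k, z) (l, β)|)
      simpa [hQ, hv2, sq_abs] using this
    have hPsum : (∑ z, (P z) ^ 2) ≤ u2 r * Ar := by
      rw [hAr, Finset.mul_sum]
      exact Finset.sum_le_sum fun z _ => hPz z
    have hQsum : (∑ z, (Q z) ^ 2) ≤ v2 r * Br := by
      rw [hBr, Finset.mul_sum]
      exact Finset.sum_le_sum fun z _ => hQz z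
    calc (S r) ^ 2 ≤ (θ * ∑ z, P z * Q z) ^ 2 := hsq
      _ = θ ^ 2 * (∑ z, P z * Q z) ^ 2 := by ring
      _ ≤ θ ^ 2 * ((∑ z, (P z) ^ 2) * (∑ z, (Q z) ^ 2)) := by
          exact mul_le_mul_of_nonneg_left hcs (by positivity)
      _ ≤ θ ^ 2 * ((u2 r * Ar) * (v2 r * Br)) := by
          have := mul_le_mul hPsum hQsum (Finset.sum_nonneg fun z _ => sq_nonneg _)
            (mul_nonneg (hu20 r) hAr0)
          exact mul_le_mul_of_nonneg_left this (by positivity)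
      _ = θ ^ 2 * u2 r * v2 r * Ar * Br := by ring
  -- assemble over r
  have h1 : (∑ r, W i j r * S r) ^ 2 ≤ (R : ℝ) * ∑ r, (W i j r * S r) ^ 2 := by
    have := sq_sum_le_card_mul_sum_sq (s := (Finset.univ : Finset (Fin R)))
      (f := fun r => W i j r * S r)
    simpa using this
  have h2 : (∑ r, (W i j r * S r) ^ 2) ≤
      ∑ r, (W i j r) ^ 2 * (θ ^ 2 * u2 r * v2 r * Ar * Br) := by
    refine Finset.sum_le_sum fun r _ => ?_
    rw [mul_pow]
    exact mul_le_mul_of_nonneg_left (hS r) (sq_nonneg _)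
  have h3 : (∑ r, (W i j r) ^ 2 * (θ ^ 2 * u2 r * v2 r * Ar * Br))
      = θ ^ 2 * (∑ r, (W i j r) ^ 2 * u2 r * v2 r) * Ar * Br := by
    rw [Finset.mul_sum, Finset.sum_mul, Finset.sum_mul]
    exact Finset.sum_congr rfl fun r _ => by ring
  calc (∑ r, W i j r * S r) ^ 2 ≤ (R : ℝ) * ∑ r, (W i j r * S r) ^ 2 := h1
    _ ≤ (R : ℝ) * (θ ^ 2 * (∑ r, (W i j r) ^ 2 * u2 r * v2 r) * Ar * Br) := by
        rw [← h3]
        exact mul_le_mul_of_nonneg_left h2 (by positivity)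
    _ = (R : ℝ) * θ ^ 2 * (∑ r, (W i j r) ^ 2 * u2 r * v2 r) * Ar * Br := by ring


section helpers2
variable {ι κ σ τ : Type*} [Fintype ι] [Fintype κ] [Fintype σ] [Fintype τ]

lemma sum_rot3' (f : ι → κ → σ → ℝ) :
    (∑ a, ∑ b, ∑ c, f a b c) = ∑ c, ∑ a, ∑ b, f a b c := by
  have h : ∀ a, (∑ b, ∑ c, f a b c) = ∑ c, ∑ b, f a b c := fun a => Finset.sum_comm
  simp_rw [h]
  exact Finset.sum_comm

lemma sum_rot4' (f : ι → κ → σ → τ → ℝ) :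
    (∑ a, ∑ b, ∑ c, ∑ d, f a b c d) = ∑ d, ∑ a, ∑ b, ∑ c, f a b c d := by
  have h : ∀ a, (∑ b, ∑ c, ∑ d, f a b c d) = ∑ d, ∑ b, ∑ c, f a b c d :=
    fun a => sum_rot3' _
  simp_rw [h]
  exact Finset.sum_comm

lemma sum_factor4 (c : ℝ) (C : ι → κ → ℝ) (f : σ → ℝ) (g : τ → ℝ) :
    (∑ i, ∑ a, ∑ j, ∑ b, c * C i j * f a * g b)
      = c * (∑ i, ∑ j, C i j) * (∑ a, f a) * (∑ b, g b) := by
  have hsw : ∀ i : ι, (∑ a, ∑ j, ∑ b, c * C i j * f a * g b)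
      = ∑ j, ∑ a, ∑ b, c * C i j * f a * g b := fun i => Finset.sum_comm
  simp_rw [hsw]
  have h1 : ∀ (i : ι) (j : κ) (a : σ), (∑ b, c * C i j * f a * g b)
      = c * C i j * f a * ∑ b, g b := fun i j a => by
    rw [show c * C i j * f a * (∑ b, g b) = (∑ b, g b) * (c * C i j * f a) from by ring,
      Finset.sum_mul]
    exact Finset.sum_congr rfl fun b _ => by ring
  have h2 : ∀ (i : ι) (j : κ), (∑ a, c * C i j * f a * ∑ b, g b)
      = c * C i j * (∑ a, f a) * ∑ b, g b := fun i j => by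
    rw [show c * C i j * (∑ a, f a) * (∑ b, g b)
        = (∑ a, f a) * (c * C i j * ∑ b, g b) from by ring, Finset.sum_mul]
    exact Finset.sum_congr rfl fun a _ => by ring
  have h3 : ∀ i : ι, (∑ j, c * C i j * (∑ a, f a) * ∑ b, g b)
      = c * (∑ j, C i j) * (∑ a, f a) * ∑ b, g b := fun i => by
    rw [show c * (∑ j, C i j) * (∑ a, f a) * (∑ b, g b)
        = (∑ j, C i j) * (c * (∑ a, f a) * ∑ b, g b) from by ring, Finset.sum_mul]
    exact Finset.sum_congr rfl fun j _ => by ring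
  simp_rw [h1, h2, h3]
  rw [show c * (∑ i, ∑ j, C i j) * (∑ a, f a) * (∑ b, g b)
      = (∑ i, ∑ j, C i j) * (c * (∑ a, f a) * ∑ b, g b) from by ring, Finset.sum_mul]
  exact Finset.sum_congr rfl fun i _ => by ring

lemma hTT {n R : ℕ} (W : Fin n → Fin n → Fin R → ℝ) (a b : Fin R → ℝ) :
    (∑ i, ∑ j, ∑ r, (W i j r) ^ 2 * a r * b r)
      = ∑ r, a r * b r * (∑ i, ∑ j, (W i j r) ^ 2) := by
  rw [sum_rot3']
  refine Finset.sum_congr rfl fun r _ => ?_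
  rw [show a r * b r * (∑ i, ∑ j, (W i j r) ^ 2)
      = (∑ i, ∑ j, (W i j r) ^ 2) * (a r * b r) from by ring, Finset.sum_mul]
  refine Finset.sum_congr rfl fun i _ => ?_
  rw [Finset.sum_mul]
  exact Finset.sum_congr rfl fun j _ => by ring

lemma reorderA {n m : ℕ} (f : Fin n → Fin m → Fin n → Fin m → ℝ) :
    (∑ a : Fin m, ∑ z : Fin m, ∑ k : Fin n, ∑ l : Fin n, f k a l z)
      = ∑ k, ∑ a, ∑ l, ∑ z, f k a l z := by
  have h : ∀ a : Fin m, (∑ z, ∑ k, ∑ l, f k a l z) = ∑ l, ∑ z, ∑ k, f k a l z :=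
    fun a => sum_rot3' _
  simp_rw [h]
  have r1 : (∑ k, ∑ a, ∑ l, ∑ z, f k a l z) = ∑ z : Fin m, ∑ k, ∑ a, ∑ l, f k a l z :=
    sum_rot4' _
  have r2 : (∑ z : Fin m, ∑ k, ∑ a, ∑ l, f k a l z)
      = ∑ l : Fin n, ∑ z, ∑ k, ∑ a, f k a l z := sum_rot4' _
  have r3 : (∑ l : Fin n, ∑ z, ∑ k, ∑ a, f k a l z)
      = ∑ a : Fin m, ∑ l, ∑ z, ∑ k, f k a l z := sum_rot4' _
  exact ((r1.trans r2).trans r3).symm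

lemma reorderB {n m : ℕ} (f : Fin n → Fin m → Fin n → Fin m → ℝ) :
    (∑ b : Fin m, ∑ z : Fin m, ∑ k : Fin n, ∑ l : Fin n, f k z l b)
      = ∑ k, ∑ z, ∑ l, ∑ b, f k z l b := by
  have h : ∀ b : Fin m, (∑ z, ∑ k, ∑ l, f k z l b) = ∑ k, ∑ z, ∑ l, f k z l b :=
    fun b => Finset.sum_comm
  simp_rw [h]
  exact (sum_rot4' _).symm

end helpers2

theorem stmt16 (n R m : ℕ) (hn : 0 < n) (hR : 0 < R) (hm : 1 ≤ m)
    (U V W : Fin n → Fin n → Fin R → ℝ)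
    (θ : ℝ) (hθ : 0 ≤ θ)
    (A B : Matrix (Fin n × Fin m) (Fin n × Fin m) ℝ)
    (Θ : Fin n → Fin n → Fin n → Fin n → Fin R → Fin m → Fin m → Fin m → ℝ)
    (hΘ : ∀ k l k' l' r α β z, |Θ k l k' l' r α β z| ≤ θ)
    (E : Matrix (Fin n × Fin m) (Fin n × Fin m) ℝ)
    (hE : ∀ (i j : Fin n) (α β : Fin m), E (i, α) (j, β) =
      ∑ r, W i j r * ∑ k, ∑ l, ∑ k', ∑ l', ∑ z,
        U k l r * V k' l' r * A (k, α) (l, z) * B (k', z) (l', β) * Θ k l k' l' r α β z) :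
    frob E ≤ θ * Real.sqrt R * frob A * frob B *
      Real.sqrt (∑ r, (∑ k, ∑ l, (U k l r) ^ 2) * (∑ k, ∑ l, (V k l r) ^ 2) *
        (∑ k, ∑ l, (W k l r) ^ 2)) := by
  classical
  have hsa0 : (0:ℝ) ≤ ∑ p : Fin n × Fin m, ∑ q : Fin n × Fin m, (A p q) ^ 2 := by positivity
  have hsb0 : (0:ℝ) ≤ ∑ p : Fin n × Fin m, ∑ q : Fin n × Fin m, (B p q) ^ 2 := by positivity
  have hT0 : (0:ℝ) ≤ ∑ r, (∑ k, ∑ l, (U k l r) ^ 2) * (∑ k, ∑ l, (V k l r) ^ 2) *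
      (∑ k, ∑ l, (W k l r) ^ 2) := by positivity
  have key : (∑ p : Fin n × Fin m, ∑ q : Fin n × Fin m, (E p q) ^ 2) ≤
      (R:ℝ) * θ ^ 2 *
        (∑ r, (∑ k, ∑ l, (U k l r) ^ 2) * (∑ k, ∑ l, (V k l r) ^ 2) *
          (∑ k, ∑ l, (W k l r) ^ 2)) *
        (∑ p : Fin n × Fin m, ∑ q : Fin n × Fin m, (A p q) ^ 2) *
        (∑ p : Fin n × Fin m, ∑ q : Fin n × Fin m, (B p q) ^ 2) := by
    calc (∑ p : Fin n × Fin m, ∑ q : Fin n × Fin m, (E p q) ^ 2)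
        = ∑ i, ∑ α, ∑ j, ∑ β, (E (i, α) (j, β)) ^ 2 := by
          rw [Fintype.sum_prod_type]
          exact Finset.sum_congr rfl fun i _ => Finset.sum_congr rfl fun α _ => by
            rw [Fintype.sum_prod_type]
      _ ≤ ∑ i, ∑ α, ∑ j, ∑ β, (R:ℝ) * θ ^ 2 *
            (∑ r, (W i j r) ^ 2 * (∑ k, ∑ l, (U k l r) ^ 2) * (∑ k, ∑ l, (V k l r) ^ 2)) *
            (∑ z, ∑ k, ∑ l, (A (k, α) (l, z)) ^ 2) *
            (∑ z, ∑ k, ∑ l, (B (k, z) (l, β)) ^ 2) := by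
          refine Finset.sum_le_sum fun i _ => Finset.sum_le_sum fun α _ =>
            Finset.sum_le_sum fun j _ => Finset.sum_le_sum fun β _ => ?_
          rw [hE i j α β]
          exact pointwise U V W θ hθ A B Θ hΘ i j α β
      _ = (R:ℝ) * θ ^ 2 *
            (∑ i, ∑ j, ∑ r, (W i j r) ^ 2 * (∑ k, ∑ l, (U k l r) ^ 2) *
              (∑ k, ∑ l, (V k l r) ^ 2)) *
            (∑ α, ∑ z, ∑ k, ∑ l, (A (k, α) (l, z)) ^ 2) *
            (∑ β, ∑ z, ∑ k, ∑ l, (B (k, z) (l, β)) ^ 2) := by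
          exact sum_factor4 ((R:ℝ) * θ ^ 2)
            (fun i j => ∑ r, (W i j r) ^ 2 * (∑ k, ∑ l, (U k l r) ^ 2) *
              (∑ k, ∑ l, (V k l r) ^ 2))
            (fun α => ∑ z, ∑ k, ∑ l, (A (k, α) (l, z)) ^ 2)
            (fun β => ∑ z, ∑ k, ∑ l, (B (k, z) (l, β)) ^ 2)
      _ = (R:ℝ) * θ ^ 2 *
            (∑ r, (∑ k, ∑ l, (U k l r) ^ 2) * (∑ k, ∑ l, (V k l r) ^ 2) *
              (∑ k, ∑ l, (W k l r) ^ 2)) *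
            (∑ p : Fin n × Fin m, ∑ q : Fin n × Fin m, (A p q) ^ 2) *
            (∑ p : Fin n × Fin m, ∑ q : Fin n × Fin m, (B p q) ^ 2) := by
          rw [hTT W (fun r => ∑ k, ∑ l, (U k l r) ^ 2) (fun r => ∑ k, ∑ l, (V k l r) ^ 2)]
          rw [reorderA (fun k a l z => (A (k, a) (l, z)) ^ 2)]
          rw [reorderB (fun k z l b => (B (k, z) (l, b)) ^ 2)]
          simp only [Fintype.sum_prod_type]
  unfold frob
  refine le_trans (Real.sqrt_le_sqrt key) ?_
  rw [show (R:ℝ) * θ ^ 2 *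
        (∑ r, (∑ k, ∑ l, (U k l r) ^ 2) * (∑ k, ∑ l, (V k l r) ^ 2) *
          (∑ k, ∑ l, (W k l r) ^ 2)) *
        (∑ p : Fin n × Fin m, ∑ q : Fin n × Fin m, (A p q) ^ 2) *
        (∑ p : Fin n × Fin m, ∑ q : Fin n × Fin m, (B p q) ^ 2)
      = θ ^ 2 * ((R:ℝ) * ((∑ p : Fin n × Fin m, ∑ q : Fin n × Fin m, (A p q) ^ 2) *
          ((∑ p : Fin n × Fin m, ∑ q : Fin n × Fin m, (B p q) ^ 2) *
            (∑ r, (∑ k, ∑ l, (U k l r) ^ 2) * (∑ k, ∑ l, (V k l r) ^ 2) *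
              (∑ k, ∑ l, (W k l r) ^ 2))))) from by ring]
  rw [Real.sqrt_mul (sq_nonneg θ), Real.sqrt_sq hθ,
    Real.sqrt_mul (by positivity : (0:ℝ) ≤ (R:ℝ)), Real.sqrt_mul hsa0, Real.sqrt_mul hsb0]
  exact le_of_eq (by ring)
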